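/- Let V ⊆ ℝ^n be the union of p spheres (each with arbitrary center and positive radius), and let A ⊆ V be a finite s-distance set. Then |A| ≤ ∑_{i=0}^{2p−1} C(n+s−i−1, s−i). -/

import Mathlib

noncomputable section

/-- The set of nonzero distances determined by a set `A` in Euclidean space. -/
def distSet {n : ℕ} (A : Set (EuclideanSpace ℝ (Fin n))) : Set ℝ :=
  {d | ∃ p ∈ A, ∃ q ∈ A, p ≠ q ∧ dist p q = d}

namespace SDistAux

open Finset MvPolynomial
open scoped Classical

/-! ### The split weight -/

def ww (m i : ℕ) : ℝ := if 2*i < m then 1 else if 2*i = m then 2⁻¹ else 0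

lemma ww_add {m i : ℕ} (h : i ≤ m) : ww m i + ww m (m - i) = 1 := by
  unfold ww
  rcases lt_trichotomy (2*i) m with h1 | h1 | h1
  · have h2 : ¬ (2*(m-i) < m) := by omega
    have h3 : ¬ (2*(m-i) = m) := by omega
    simp [h1, h2, h3]
  · have h2 : ¬ (2*i < m) := by omega
    have h3 : 2*(m-i) = m := by omega
    have h4 : ¬ (2*(m-i) < m) := by omega
    simp [h1, h2, h3, h4]
    norm_num
  · have h2 : ¬ (2*i < m) := by omega
    have h3 : ¬ (2*i = m) := by omega
    have h4 : 2*(m-i) < m := by omega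
    simp [h2, h3, h4]

lemma ww_ne_zero {m i : ℕ} (h : ww m i ≠ 0) : 2*i ≤ m := by
  unfold ww at h
  split_ifs at h with h1 h2
  · omega
  · omega
  · simp at h

lemma sym_sum (m : ℕ) (x y : ℝ) :
    (∑ i ∈ range (m+1), ww m i * (m.choose i) * x^(2*i) * y^(2*(m-i)))
    + (∑ i ∈ range (m+1), ww m i * (m.choose i) * y^(2*i) * x^(2*(m-i)))
    = (x^2+y^2)^m := by
  have h2 : (∑ i ∈ range (m+1), ww m i * (m.choose i) * y^(2*i) * x^(2*(m-i)))
      = ∑ i ∈ range (m+1), ww m (m-i) * (m.choose i) * y^(2*(m-i)) * x^(2*i) := by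
    rw [← Finset.sum_range_reflect]
    refine Finset.sum_congr rfl fun i hi => ?_
    simp only [Finset.mem_range] at hi
    have h1 : m + 1 - 1 - i = m - i := by omega
    have h3 : m - (m - i) = i := by omega
    rw [h1, h3, Nat.choose_symm (by omega : i ≤ m)]
  rw [h2, ← Finset.sum_add_distrib]
  rw [add_pow]
  refine Finset.sum_congr rfl fun i hi => ?_
  simp only [Finset.mem_range] at hi
  have hw := ww_add (m := m) (i := i) (by omega)
  simp only [pow_mul]
  linear_combination (↑(m.choose i) * (x^2)^i * (y^2)^(m-i)) * hw

/-! ### The matrix `FF` and its symmetrization -/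

variable {n : ℕ}

def FF (D : Finset ℝ) (a b : EuclideanSpace ℝ (Fin n)) : ℝ :=
  ∑ t ∈ D.powerset, (∏ d ∈ t, (-(d^2)⁻¹)) *
    (∑ i ∈ Finset.range (t.card+1),
      ww t.card i * (t.card.choose i) * ‖a‖^(2*i) * ‖b‖^(2*(t.card - i))) *
    ∏ d ∈ D \ t, (1 + 2*(inner ℝ a b : ℝ)/d^2)

lemma FF_add_symm (D : Finset ℝ) (a b : EuclideanSpace ℝ (Fin n)) :
    FF D a b + FF D b a = ∏ d ∈ D, (1 - dist a b^2/d^2) := by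
  have hdist : ∀ d : ℝ, 1 - dist a b^2/d^2
      = (-(‖a‖^2+‖b‖^2))*(d^2)⁻¹ + (1 + 2*(inner ℝ a b : ℝ)/d^2) := by
    intro d
    rw [dist_eq_norm, norm_sub_sq_real]
    by_cases hd : d = 0
    · simp [hd]
    · field_simp
      ring
  calc FF D a b + FF D b a
      = ∑ t ∈ D.powerset, ((∏ d ∈ t, (-(d^2)⁻¹)) * (‖a‖^2+‖b‖^2)^t.card) *
          ∏ d ∈ D \ t, (1 + 2*(inner ℝ a b : ℝ)/d^2) := by
        unfold FF
        rw [← Finset.sum_add_distrib]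
        refine Finset.sum_congr rfl fun t _ => ?_
        rw [real_inner_comm b a, ← add_mul, ← mul_add]
        congr 1
        congr 1
        exact sym_sum _ _ _
    _ = ∑ t ∈ D.powerset, (∏ d ∈ t, ((-(‖a‖^2+‖b‖^2)) * (d^2)⁻¹)) *
          ∏ d ∈ D \ t, (1 + 2*(inner ℝ a b : ℝ)/d^2) := by
        refine Finset.sum_congr rfl fun t _ => ?_
        congr 1
        rw [Finset.prod_mul_distrib, Finset.prod_const]
        have h5 : ∏ d ∈ t, (-(d^2)⁻¹ : ℝ) = (-1)^t.card * ∏ d ∈ t, (d^2)⁻¹ := by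
          rw [← Finset.prod_const, ← Finset.prod_mul_distrib]
          exact Finset.prod_congr rfl fun d _ => by ring
        rw [h5, neg_pow (‖a‖^2+‖b‖^2)]
        ring
    _ = ∏ d ∈ D, (1 - dist a b^2/d^2) := by
        rw [Finset.prod_congr rfl fun d _ => hdist d, Finset.prod_add]

lemma prod_ite (D : Finset ℝ) (a b : EuclideanSpace ℝ (Fin n))
    (hD : a ≠ b → dist a b ∈ D) :
    ∏ d ∈ D, (1 - dist a b^2/d^2) = if a = b then 1 else 0 := by
  by_cases hab : a = b
  · simp [hab]
  · rw [if_neg hab]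
    refine Finset.prod_eq_zero (hD hab) ?_
    have : dist a b ≠ 0 := dist_ne_zero.mpr hab
    field_simp
    norm_num

/-! ### Polynomials -/

def NN : MvPolynomial (Fin n) ℝ := ∑ j, X j ^ 2
def LL (b : EuclideanSpace ℝ (Fin n)) : MvPolynomial (Fin n) ℝ := ∑ j, C (b j) * X j

lemma hinner (a b : EuclideanSpace ℝ (Fin n)) : (inner ℝ a b : ℝ) = ∑ j, a j * b j := by
  simp [PiLp.inner_apply, RCLike.inner_apply, conj_trivial, mul_comm]

lemma eval_NN (a : EuclideanSpace ℝ (Fin n)) :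
    eval (fun j => a j) NN = ‖a‖^2 := by
  rw [← real_inner_self_eq_norm_sq, hinner a a]
  simp [NN, sq]

lemma eval_LL (a b : EuclideanSpace ℝ (Fin n)) :
    eval (fun j => a j) (LL b) = (inner ℝ a b : ℝ) := by
  rw [hinner a b]
  simp [LL, mul_comm]

lemma totalDegree_NN : (NN (n := n)).totalDegree ≤ 2 := by
  refine le_trans (totalDegree_finset_sum _ _) ?_
  refine Finset.sup_le fun j _ => ?_
  refine le_trans (totalDegree_pow _ _) ?_
  simp [totalDegree_X]

lemma totalDegree_LL (b : EuclideanSpace ℝ (Fin n)) : (LL b).totalDegree ≤ 1 := by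
  refine le_trans (totalDegree_finset_sum _ _) ?_
  refine Finset.sup_le fun j _ => ?_
  refine le_trans (totalDegree_mul _ _) ?_
  simp [totalDegree_X, totalDegree_C]

def qq (D : Finset ℝ) (b : EuclideanSpace ℝ (Fin n)) : MvPolynomial (Fin n) ℝ :=
  ∑ t ∈ D.powerset, C (∏ d ∈ t, (-(d^2)⁻¹)) *
    (∑ i ∈ Finset.range (t.card+1),
      C (ww t.card i * (t.card.choose i) * ‖b‖^(2*(t.card - i))) * NN^i) *
    ∏ d ∈ D \ t, (1 + C (2/d^2) * LL b)

lemma totalDegree_qq (D : Finset ℝ) (b : EuclideanSpace ℝ (Fin n)) :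
    (qq D b).totalDegree ≤ D.card := by
  refine le_trans (totalDegree_finset_sum _ _) ?_
  refine Finset.sup_le fun t ht => ?_
  rw [Finset.mem_powerset] at ht
  have hm : t.card ≤ D.card := Finset.card_le_card ht
  refine le_trans (totalDegree_mul _ _) ?_
  have h1 : (C (∏ d ∈ t, (-(d^2)⁻¹)) *
      (∑ i ∈ Finset.range (t.card+1),
        C (ww t.card i * (t.card.choose i) * ‖b‖^(2*(t.card - i))) * (NN (n:=n))^i)).totalDegree
      ≤ t.card := by
    refine le_trans (totalDegree_mul _ _) ?_
    rw [totalDegree_C]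
    simp only [zero_add]
    refine le_trans (totalDegree_finset_sum _ _) ?_
    refine Finset.sup_le fun i hi => ?_
    by_cases hw : ww t.card i = 0
    · simp [hw]
    · have h2i := ww_ne_zero hw
      refine le_trans (totalDegree_mul _ _) ?_
      rw [totalDegree_C]
      simp only [zero_add]
      refine le_trans (totalDegree_pow _ _) ?_
      calc i * (NN (n:=n)).totalDegree ≤ i * 2 := Nat.mul_le_mul_left i totalDegree_NN
        _ ≤ t.card := by omega
  have h2 : (∏ d ∈ D \ t, (1 + C (2/d^2) * LL b)).totalDegree ≤ (D \ t).card := by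
    refine le_trans (totalDegree_finset_prod _ _) ?_
    have hfac : ∀ d ∈ D \ t, (1 + C (2/d^2) * LL b).totalDegree ≤ 1 := by
      intro d _
      refine le_trans (totalDegree_add _ _) ?_
      simp only [totalDegree_one, max_le_iff]
      refine ⟨by omega, ?_⟩
      refine le_trans (totalDegree_mul _ _) ?_
      rw [totalDegree_C]
      simpa using totalDegree_LL b
    refine le_trans (Finset.sum_le_sum (g := fun _ => 1) hfac) ?_
    simp
  have h3 : (D \ t).card = D.card - t.card := Finset.card_sdiff_of_subset ht
  omega

lemma eval_qq (D : Finset ℝ) (a b : EuclideanSpace ℝ (Fin n)) :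
    eval (fun j => a j) (qq D b) = FF D a b := by
  unfold qq FF
  rw [map_sum]
  refine Finset.sum_congr rfl fun t _ => ?_
  rw [map_mul, map_mul, eval_C, map_sum, map_prod]
  congr 1
  · congr 1
    refine Finset.sum_congr rfl fun i _ => ?_
    rw [map_mul, eval_C, map_pow, eval_NN, ← pow_mul]
    ring
  · refine Finset.prod_congr rfl fun d _ => ?_
    rw [map_add, map_one, map_mul, eval_C, eval_LL]
    ring

def qi (cc : EuclideanSpace ℝ (Fin n)) (rr : ℝ) : MvPolynomial (Fin n) ℝ :=
  NN - C 2 * LL cc + C (‖cc‖^2 - rr^2)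

lemma eval_qi (cc : EuclideanSpace ℝ (Fin n)) (rr : ℝ) (a : EuclideanSpace ℝ (Fin n)) :
    eval (fun j => a j) (qi cc rr) = dist a cc^2 - rr^2 := by
  unfold qi
  rw [map_add, map_sub, map_mul, eval_C, eval_C, eval_NN, eval_LL]
  rw [dist_eq_norm, norm_sub_sq_real]
  ring

lemma qi_ne_zero (cc : EuclideanSpace ℝ (Fin n)) {rr : ℝ} (h : 0 < rr) :
    qi cc rr ≠ 0 := by
  intro hq
  have := eval_qi cc rr cc
  rw [hq] at this
  simp at this
  nlinarith

lemma totalDegree_qi (cc : EuclideanSpace ℝ (Fin n)) (rr : ℝ) :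
    (qi cc rr).totalDegree ≤ 2 := by
  unfold qi
  refine le_trans (totalDegree_add _ _) ?_
  rw [max_le_iff]
  constructor
  · rw [sub_eq_add_neg]
    refine le_trans (totalDegree_add _ _) ?_
    rw [max_le_iff]
    constructor
    · refine le_trans (totalDegree_finset_sum _ _) ?_
      refine Finset.sup_le fun j _ => ?_
      refine le_trans (totalDegree_pow _ _) ?_
      simp [totalDegree_X]
    · rw [totalDegree_neg]
      refine le_trans (totalDegree_mul _ _) ?_
      rw [totalDegree_C]
      simp only [zero_add]
      refine le_trans ?_ (by omega : (1:ℕ) ≤ 2)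
      refine le_trans (totalDegree_finset_sum _ _) ?_
      refine Finset.sup_le fun j _ => ?_
      refine le_trans (totalDegree_mul _ _) ?_
      simp [totalDegree_X, totalDegree_C]
  · exact le_trans (MvPolynomial.totalDegree_C _).le (by omega)

/-! ### Linear algebra -/

lemma card_le_finrank_range {α ι : Type*} [Fintype α] [DecidableEq α] [Fintype ι]
    (F : α → α → ℝ) (hsym : ∀ a b, F a b + F b a = if a = b then 1 else 0)
    (Φ : (ι → ℝ) →ₗ[ℝ] (α → ℝ))
    (hcol : ∀ b : α, (fun a => F a b) ∈ LinearMap.range Φ) :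
    Fintype.card α ≤ Module.finrank ℝ (LinearMap.range Φ) := by
  let ψ : (α → ℝ) →ₗ[ℝ] (α → ℝ) :=
    { toFun := fun v a => ∑ b, F a b * v b
      map_add' := by
        intro v w
        funext a
        simp [mul_add, Finset.sum_add_distrib]
      map_smul' := by
        intro r v
        funext a
        simp [Finset.mul_sum]
        refine Finset.sum_congr rfl fun b _ => by ring }
  have hψr : ∀ v, ψ v ∈ LinearMap.range Φ := by
    intro v
    have hv : ψ v = ∑ b : α, v b • (fun a => F a b) := by
      funext a
      simp [ψ, Finset.sum_apply, mul_comm]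
    rw [hv]
    exact Submodule.sum_mem _ fun b _ => Submodule.smul_mem _ _ (hcol b)
  have hinj : Function.Injective ψ := by
    rw [injective_iff_map_eq_zero]
    intro v hv
    have h0 : ∀ a, ∑ b, F a b * v b = 0 := fun a => congrFun hv a
    have hsq : ∑ a, v a * v a = 0 := by
      have expand : ∀ a : α, v a * v a
          = ∑ b : α, (v a * (F a b * v b) + v a * (F b a * v b)) := by
        intro a
        rw [Finset.sum_congr rfl (fun b _ => by rw [show v a * (F a b * v b) + v a * (F b a * v b)
          = v a * ((F a b + F b a) * v b) from by ring, hsym a b])]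
        simp [ite_mul, mul_ite]
      have e1 : ∑ a : α, ∑ b : α, v a * (F a b * v b) = 0 := by
        refine Finset.sum_eq_zero fun a _ => ?_
        rw [← Finset.mul_sum, h0 a, mul_zero]
      have e2 : ∑ a : α, ∑ b : α, v a * (F b a * v b) = 0 := by
        rw [Finset.sum_comm]
        refine Finset.sum_eq_zero fun b _ => ?_
        have : ∑ a : α, v a * (F b a * v b) = (∑ a : α, F b a * v a) * v b := by
          rw [Finset.sum_mul]
          exact Finset.sum_congr rfl fun a _ => by ring
        rw [this, h0 b, zero_mul]
      calc ∑ a, v a * v a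
          = ∑ a : α, ∑ b : α, (v a * (F a b * v b) + v a * (F b a * v b)) :=
            Finset.sum_congr rfl fun a _ => expand a
        _ = (∑ a : α, ∑ b : α, v a * (F a b * v b))
            + ∑ a : α, ∑ b : α, v a * (F b a * v b) := by
            simp [Finset.sum_add_distrib]
        _ = 0 := by rw [e1, e2, add_zero]
    have hz := (Finset.sum_eq_zero_iff_of_nonneg
      (fun a _ => mul_self_nonneg (v a))).mp hsq
    funext a
    exact mul_self_eq_zero.mp (hz a (Finset.mem_univ a))
  calc Fintype.card α = Module.finrank ℝ (α → ℝ) := (Module.finrank_pi ℝ).symm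
    _ = Module.finrank ℝ (LinearMap.range ψ) := (LinearMap.finrank_range_of_inj hinj).symm
    _ ≤ Module.finrank ℝ (LinearMap.range Φ) := by
        apply Submodule.finrank_mono
        rintro x ⟨v, rfl⟩
        exact hψr v

lemma finrank_range_le_of_ker {ι ι₀ : Type*} [Fintype ι] [Fintype ι₀] {W : Type*}
    [AddCommGroup W] [Module ℝ W]
    (Φ : (ι → ℝ) →ₗ[ℝ] W) (Ψ : (ι₀ → ℝ) →ₗ[ℝ] (ι → ℝ))
    (hinj : Function.Injective Ψ) (hcomp : ∀ c, Φ (Ψ c) = 0) :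
    Module.finrank ℝ (LinearMap.range Φ) + Fintype.card ι₀ ≤ Fintype.card ι := by
  have h1 := LinearMap.finrank_range_add_finrank_ker Φ
  rw [Module.finrank_pi ℝ] at h1
  have h2 : Fintype.card ι₀ ≤ Module.finrank ℝ (LinearMap.ker Φ) := by
    calc Fintype.card ι₀ = Module.finrank ℝ ((ι₀ → ℝ)) := (Module.finrank_pi ℝ).symm
      _ = Module.finrank ℝ (LinearMap.range Ψ) := (LinearMap.finrank_range_of_inj hinj).symm
      _ ≤ Module.finrank ℝ (LinearMap.ker Φ) := by
          apply Submodule.finrank_mono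
          rintro x ⟨c, rfl⟩
          exact hcomp c
  omega

/-! ### Counting monomials -/

def bB (n s : ℕ) : Fin n →₀ ℕ := Finsupp.equivFunOnFinite.symm (fun _ => s)

def degE (β : Fin n →₀ ℕ) : ℕ := β.sum fun _ e => e

lemma mem_Iic_of_deg {s : ℕ} {β : Fin n →₀ ℕ} (h : degE β ≤ s) :
    β ∈ Finset.Iic (bB n s) := by
  rw [Finset.mem_Iic]
  intro j
  have hj : β j ≤ degE β := by
    by_cases hz : β j = 0
    · omega
    · have hjs : j ∈ β.support := Finsupp.mem_support_iff.mpr hz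
      have : β j ≤ ∑ k ∈ β.support, β k :=
        Finset.single_le_sum (f := fun k => β k) (fun _ _ => Nat.zero_le _) hjs
      exact this
  have : bB n s j = s := rfl
  omega

lemma card_deg_eq {s : ℕ} (u : ℕ) (hu : u ≤ s) :
    (((Finset.Iic (bB n s)).filter (fun β => degE β = u)).card) = (n + u - 1).choose u := by
  have hsym : (n + u - 1).choose u = Fintype.card (Sym (Fin n) u) := by
    rw [Sym.card_sym_eq_multichoose, Fintype.card_fin, Nat.multichoose_eq]
  rw [hsym, Fintype.card]
  · refine Finset.card_bij' (i := fun β hβ => (⟨Finsupp.toMultiset β, ?_⟩ : Sym (Fin n) u))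
      (j := fun m _ => Multiset.toFinsupp (↑m : Multiset (Fin n))) ?_ ?_ ?_ ?_
    · simp only [Finset.mem_filter] at hβ
      have h1 : Multiset.card (Finsupp.toMultiset β) = degE β := Finsupp.card_toMultiset _
      rw [h1]
      exact hβ.2
    · intro β hβ
      exact Finset.mem_univ _
    · intro m _
      simp only [Finset.mem_filter]
      have hcard : degE (Multiset.toFinsupp (↑m : Multiset (Fin n))) = u := by
        have h1 : degE (Multiset.toFinsupp (↑m : Multiset (Fin n)))
            = Multiset.card (Finsupp.toMultiset (Multiset.toFinsupp (↑m : Multiset (Fin n)))) :=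
          (Finsupp.card_toMultiset _).symm
        rw [h1, Multiset.toFinsupp_toMultiset]
        exact m.2
      exact ⟨mem_Iic_of_deg (by omega), hcard⟩
    · intro β hβ
      exact Finsupp.toMultiset_toFinsupp β
    · intro m _
      exact Sym.coe_injective (by simp [Multiset.toFinsupp_toMultiset])

lemma count_main {s : ℕ} (p : ℕ) :
    ((Finset.Iic (bB n s)).filter (fun β => degE β ≤ s)).card ≤
    ((Finset.Iic (bB n s)).filter (fun β => degE β + 2*p ≤ s)).card
    + ∑ i ∈ Finset.range (2*p), (if i ≤ s then (n + s - i - 1).choose (s-i) else 0) := by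
  set S := (Finset.Iic (bB n s)).filter (fun β => degE β ≤ s) with hS
  set S₀ := (Finset.Iic (bB n s)).filter (fun β => degE β + 2*p ≤ s) with hS0
  have hsub : S₀ ⊆ S := by
    intro β hβ
    simp only [hS, hS0, Finset.mem_filter] at hβ ⊢
    exact ⟨hβ.1, by omega⟩
  have hcards : (S \ S₀).card + S₀.card = S.card := Finset.card_sdiff_add_card_eq_card hsub
  have hfib : (S \ S₀).card = ∑ i ∈ Finset.range (2*p),
      ((S \ S₀).filter (fun β => s - degE β = i)).card := by
    refine Finset.card_eq_sum_card_fiberwise ?_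
    intro β hβ
    simp only [Finset.mem_coe, Finset.mem_sdiff, hS, hS0, Finset.mem_filter] at hβ
    have h1 := hβ.1.2
    have h2 : ¬(degE β + 2*p ≤ s) := fun h => hβ.2 ⟨hβ.1.1, h⟩
    simp only [Finset.mem_coe, Finset.mem_range]
    omega
  have hbound : ∀ i ∈ Finset.range (2*p), ((S \ S₀).filter (fun β => s - degE β = i)).card
      ≤ (if i ≤ s then (n + s - i - 1).choose (s-i) else 0) := by
    intro i _
    by_cases his : i ≤ s
    · rw [if_pos his]
      have hss : (S \ S₀).filter (fun β => s - degE β = i)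
          ⊆ (Finset.Iic (bB n s)).filter (fun β => degE β = s - i) := by
        intro β hβ
        simp only [Finset.mem_filter, Finset.mem_sdiff, hS, hS0] at hβ ⊢
        exact ⟨hβ.1.1.1, by omega⟩
      refine le_trans (Finset.card_le_card hss) ?_
      rw [card_deg_eq (s-i) (by omega)]
      have : n + s - i - 1 = n + (s-i) - 1 := by omega
      rw [this]
    · rw [if_neg his]
      have hemp : (S \ S₀).filter (fun β => s - degE β = i) = ∅ := by
        rw [Finset.filter_eq_empty_iff]
        intro β hβ
        simp only [Finset.mem_sdiff, hS, hS0, Finset.mem_filter] at hβ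
        have h1 := hβ.1.2
        omega
      rw [hemp]
      simp
  have := Finset.sum_le_sum hbound
  omega

end SDistAux

/-- Bound for `s`-distance sets on a union of `p` spheres in `ℝ^n`
(binomial coefficients with negative lower index are `0`, whence the `if`). -/
theorem sdist_on_union_of_spheres {n p s : ℕ}
    (c : Fin p → EuclideanSpace ℝ (Fin n)) (r : Fin p → ℝ) (hr : ∀ i, 0 < r i)
    (A : Finset (EuclideanSpace ℝ (Fin n)))
    (hA : (distSet (A : Set (EuclideanSpace ℝ (Fin n)))).ncard ≤ s)
    (hmem : ∀ a ∈ A, ∃ i, dist a (c i) = r i) :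
    A.card ≤ ∑ i ∈ Finset.range (2 * p),
      if i ≤ s then (n + s - i - 1).choose (s - i) else 0 := by
  classical
  open Finset MvPolynomial SDistAux in
  -- the distance set as a finset
  have hfinD : (distSet (A : Set (EuclideanSpace ℝ (Fin n)))).Finite := by
    refine Set.Finite.subset (Set.Finite.image2 dist A.finite_toSet A.finite_toSet) ?_
    rintro d ⟨x, hx, y, hy, hxy, rfl⟩
    exact Set.mem_image2_of_mem hx hy
  set D : Finset ℝ := hfinD.toFinset with hD
  have hDcard : D.card ≤ s := by
    rwa [Set.ncard_eq_toFinset_card _ hfinD] at hA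
  have hDmem : ∀ a ∈ A, ∀ b ∈ A, a ≠ b → dist a b ∈ D := by
    intro a ha b hb hab
    rw [hD, Set.Finite.mem_toFinset]
    exact ⟨a, ha, b, hb, hab, rfl⟩
  -- key identity
  have key : ∀ a b : ↥A, FF D a.1 b.1 + FF D b.1 a.1 = if a = b then (1:ℝ) else 0 := by
    intro a b
    rw [FF_add_symm, prod_ite D a.1 b.1 (fun hab => hDmem _ a.2 _ b.2 hab)]
    by_cases hab : a = b
    · rw [if_pos hab, if_pos (by rw [hab])]
    · rw [if_neg (fun h => hab (Subtype.ext h)), if_neg hab]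
  -- the vanishing polynomial
  set G : MvPolynomial (Fin n) ℝ := ∏ i : Fin p, qi (c i) (r i) with hG
  have hGdeg : G.totalDegree ≤ 2*p := by
    rw [hG]
    refine le_trans (totalDegree_finset_prod _ _) ?_
    refine le_trans (Finset.sum_le_sum (g := fun _ => 2)
      (fun i _ => totalDegree_qi (c i) (r i))) ?_
    simp [mul_comm]
  have hGne : G ≠ 0 := by
    rw [hG, Finset.prod_ne_zero_iff]
    exact fun i _ => qi_ne_zero (c i) (hr i)
  have hGvan : ∀ a ∈ A, eval (fun j => a j) G = 0 := by
    intro a ha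
    obtain ⟨i, hi⟩ := hmem a ha
    rw [hG, map_prod]
    refine Finset.prod_eq_zero (Finset.mem_univ i) ?_
    rw [eval_qi, hi]
    ring
  -- monomial index sets
  set S : Finset (Fin n →₀ ℕ) := (Finset.Iic (bB n s)).filter (fun β => degE β ≤ s) with hS
  set S₀ : Finset (Fin n →₀ ℕ) :=
    (Finset.Iic (bB n s)).filter (fun β => degE β + 2*p ≤ s) with hS0
  have hsupp : ∀ q : MvPolynomial (Fin n) ℝ, q.totalDegree ≤ s → q.support ⊆ S := by
    intro q hq β hβ
    have hdeg : degE β ≤ s := le_trans (MvPolynomial.le_totalDegree hβ) hq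
    rw [hS, Finset.mem_filter]
    exact ⟨mem_Iic_of_deg hdeg, hdeg⟩
  -- the evaluation map
  set Φ : (↥S → ℝ) →ₗ[ℝ] (↥A → ℝ) :=
    { toFun := fun coef a =>
        ∑ β : ↥S, coef β * eval (fun j => (a:EuclideanSpace ℝ (Fin n)) j) (monomial β.1 (1:ℝ))
      map_add' := by
        intro x y
        funext a
        simp [add_mul, Finset.sum_add_distrib]
      map_smul' := by
        intro t x
        funext a
        simp only [Pi.smul_apply, smul_eq_mul, RingHom.id_apply]
        rw [Finset.mul_sum]
        exact Finset.sum_congr rfl fun β _ => by ring } with hΦ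
  have expand : ∀ q : MvPolynomial (Fin n) ℝ, q.totalDegree ≤ s →
      ∀ a : EuclideanSpace ℝ (Fin n),
      eval (fun j => a j) q
        = ∑ β : ↥S, coeff β.1 q * eval (fun j => a j) (monomial β.1 (1:ℝ)) := by
    intro q hq a
    calc eval (fun j => a j) q
        = ∑ β ∈ q.support, coeff β q * eval (fun j => a j) (monomial β (1:ℝ)) := by
          conv_lhs => rw [q.as_sum]
          rw [map_sum]
          exact Finset.sum_congr rfl fun β _ => by simp [eval_monomial]
      _ = ∑ β ∈ S, coeff β q * eval (fun j => a j) (monomial β (1:ℝ)) := by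
          refine Finset.sum_subset (hsupp q hq) fun β _ hβ => ?_
          rw [MvPolynomial.notMem_support_iff.mp hβ, zero_mul]
      _ = ∑ β : ↥S, coeff β.1 q * eval (fun j => a j) (monomial β.1 (1:ℝ)) := by
          rw [Finset.univ_eq_attach]
          exact (Finset.sum_attach S fun β =>
            coeff β q * eval (fun j => a j) (monomial β (1:ℝ))).symm
  -- columns of FF lie in the range of Φ
  have hcol : ∀ b : ↥A, (fun a : ↥A => FF D a.1 b.1) ∈ LinearMap.range Φ := by
    intro b
    refine ⟨fun β => coeff β.1 (qq D b.1), ?_⟩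
    funext a
    have hdq : (qq D b.1).totalDegree ≤ s :=
      le_trans (totalDegree_qq _ _) hDcard
    have := expand (qq D b.1) hdq a.1
    rw [eval_qq] at this
    exact this.symm
  -- the syzygy map
  set hh : (↥S₀ → ℝ) → MvPolynomial (Fin n) ℝ :=
    fun coef => ∑ γ : ↥S₀, monomial γ.1 (coef γ) with hhh
  have hhdeg : ∀ coef, (G * hh coef).totalDegree ≤ s := by
    intro coef
    by_cases h0 : hh coef = 0
    · rw [h0, mul_zero]
      simp
    · have hsup : ∀ β ∈ (hh coef).support, degE β + 2*p ≤ s := by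
        intro β hβ
        simp only [hhh] at hβ
        have hb2 := MvPolynomial.support_sum hβ
        rw [Finset.mem_biUnion] at hb2
        obtain ⟨γ, _, hγ⟩ := hb2
        have hβγ : β = γ.1 :=
          Finset.mem_singleton.mp (MvPolynomial.support_monomial_subset hγ)
        have hγ2 := γ.2
        simp only [hS0, Finset.mem_filter] at hγ2
        subst hβγ
        exact hγ2.2
      have hne : (hh coef).support.Nonempty := MvPolynomial.support_nonempty.mpr h0
      obtain ⟨β₁, hβ₁⟩ := hne
      have h2ps : 2*p ≤ s := by
        have := hsup β₁ hβ₁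
        omega
      have hth : (hh coef).totalDegree ≤ s - 2*p := by
        refine Finset.sup_le fun β hβ => ?_
        show degE β ≤ s - 2*p
        have := hsup β hβ
        omega
      refine le_trans (totalDegree_mul _ _) ?_
      omega
  set Ψ : (↥S₀ → ℝ) →ₗ[ℝ] (↥S → ℝ) :=
    { toFun := fun coef β => coeff β.1 (G * hh coef)
      map_add' := by
        intro x y
        funext β
        have h1 : hh (x + y) = hh x + hh y := by
          simp only [hhh]
          rw [← Finset.sum_add_distrib]
          refine Finset.sum_congr rfl fun γ _ => ?_
          rw [Pi.add_apply]
          exact map_add (monomial γ.1) _ _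
        show coeff β.1 (G * hh (x + y)) = coeff β.1 (G * hh x) + coeff β.1 (G * hh y)
        rw [h1, mul_add, MvPolynomial.coeff_add]
      map_smul' := by
        intro t x
        funext β
        have h1 : hh (t • x) = t • hh x := by
          simp only [hhh]
          rw [Finset.smul_sum]
          refine Finset.sum_congr rfl fun γ _ => ?_
          rw [Pi.smul_apply, MvPolynomial.smul_monomial]
        show coeff β.1 (G * hh (t • x)) = t * coeff β.1 (G * hh x)
        rw [h1, mul_smul_comm, MvPolynomial.coeff_smul, smul_eq_mul] } with hΨ
  have hΨinj : Function.Injective Ψ := by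
    rw [injective_iff_map_eq_zero]
    intro coef hc
    have hGH : G * hh coef = 0 := by
      apply MvPolynomial.ext
      intro β
      rw [MvPolynomial.coeff_zero]
      by_cases hβS : β ∈ S
      · exact congrFun hc ⟨β, hβS⟩
      · by_contra hne
        exact hβS (hsupp _ (hhdeg coef) (MvPolynomial.mem_support_iff.mpr hne))
    have hh0 : hh coef = 0 := by
      rcases mul_eq_zero.mp hGH with h | h
      · exact absurd h hGne
      · exact h
    funext γ
    have hcg : coeff γ.1 (hh coef) = coef γ := by
      simp only [hhh]
      rw [MvPolynomial.coeff_sum]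
      rw [Finset.sum_eq_single γ]
      · rw [MvPolynomial.coeff_monomial, if_pos rfl]
      · intro γ' _ hγ'
        rw [MvPolynomial.coeff_monomial, if_neg (fun h => hγ' (Subtype.ext h))]
      · intro h
        exact absurd (Finset.mem_univ γ) h
    rw [hh0] at hcg
    simp only [MvPolynomial.coeff_zero] at hcg
    exact hcg.symm
  have hcomp : ∀ coef, Φ (Ψ coef) = 0 := by
    intro coef
    funext a
    show ∑ β : ↥S, coeff β.1 (G * hh coef)
        * eval (fun j => (a : EuclideanSpace ℝ (Fin n)) j) (monomial β.1 (1:ℝ)) = 0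
    rw [← expand _ (hhdeg coef) a.1]
    rw [map_mul, hGvan _ a.2, zero_mul]
  have m1 : A.card ≤ Module.finrank ℝ (LinearMap.range Φ) := by
    have := card_le_finrank_range (fun a b : ↥A => FF D a.1 b.1) key Φ hcol
    rwa [Fintype.card_coe] at this
  have m2 := finrank_range_le_of_ker Φ Ψ hΨinj hcomp
  rw [Fintype.card_coe, Fintype.card_coe] at m2
  have m3 := count_main (n := n) (s := s) p
  rw [← hS, ← hS0] at m3
  omega
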